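/- Let a, b be odd coprime integers and ε ∈ {±1}, and consider the triple L(ε,a,b) = (L_a, −ε·L_{a+εb}, L_b), a solution of x₁² − x₂² + x₃² + x₁x₂x₃ = 4. Then the three mutations of this solution are again of the same form: mutation in the first coordinate yields L(ε, −a−2εb, b), mutation in the second yields L(−ε, a, b), and mutation in the third yields L(ε, a, −b−2εa). Explicitly, −L_a·L_b·(−ε L_{a+εb}) − L_a = L_{−a−2εb} in the first case, x₁x₃ − x₂ with sign conventions gives ε·L_{a−εb} in the second, and similarly L_{−b−2εa} in the third. -/

import Mathlib

/-- Fibonacci numbers extended to all integer indices. -/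
def fibZ : ℤ → ℤ
  | Int.ofNat n => Nat.fib n
  | Int.negSucc n => (-1) ^ n * Nat.fib (n + 1)

/-- Lucas numbers extended to all integer indices: `L_n = F_{n−1} + F_{n+1}`. -/
def lucZ (n : ℤ) : ℤ := fibZ (n - 1) + fibZ (n + 1)

lemma fibZ_rec (n : ℤ) : fibZ (n + 2) = fibZ (n + 1) + fibZ n := by
  match n with
  | Int.ofNat k =>
      show fibZ ((k : ℤ) + 2) = fibZ ((k : ℤ) + 1) + fibZ k
      have h2 : ((k : ℤ) + 2) = Int.ofNat (k + 2) := by simp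
      have h1 : ((k : ℤ) + 1) = Int.ofNat (k + 1) := by simp
      rw [h2, h1]
      simp [fibZ, Nat.fib_add_two]
      ring
  | Int.negSucc 0 => decide
  | Int.negSucc 1 => decide
  | Int.negSucc (k+2) =>
      have h2 : (Int.negSucc (k+2) : ℤ) + 2 = Int.negSucc k := by
        rw [Int.negSucc_eq, Int.negSucc_eq]; push_cast; ring
      have h1 : (Int.negSucc (k+2) : ℤ) + 1 = Int.negSucc (k+1) := by
        rw [Int.negSucc_eq, Int.negSucc_eq]; push_cast; ring
      rw [h2, h1]
      simp only [fibZ]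
      have : Nat.fib (k + 2 + 1) = Nat.fib (k+1) + Nat.fib (k+2) := by
        rw [show k+2+1 = (k+1)+2 from rfl, Nat.fib_add_two]
      push_cast [this, pow_succ]
      ring

lemma lucZ_rec (n : ℤ) : lucZ (n + 2) = lucZ (n + 1) + lucZ n := by
  unfold lucZ
  have h1 := fibZ_rec (n - 1)
  have h2 := fibZ_rec (n + 1)
  ring_nf at h1 h2 ⊢
  linarith

lemma lucZ_zero : lucZ 0 = 2 := by decide
lemma lucZ_one : lucZ 1 = 1 := by decide

lemma lucZ_key (m n : ℤ) :
    lucZ m * lucZ n = lucZ (m + n) + (n.negOnePow : ℤ) * lucZ (m - n) := by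
  have H : ∀ p : ℤ,
      (lucZ m * lucZ p = lucZ (m + p) + (p.negOnePow : ℤ) * lucZ (m - p)) ∧
      (lucZ m * lucZ (p + 1) =
        lucZ (m + (p + 1)) + ((p + 1).negOnePow : ℤ) * lucZ (m - (p + 1))) := by
    intro p
    induction p using Int.induction_on with
    | zero =>
        constructor
        · simp [lucZ_zero]; ring
        · have h1 := lucZ_rec (m - 1)
          have h2 : m - 1 + 2 = m + 1 := by ring
          have h3 : m - 1 + 1 = m := by ring
          rw [h2, h3] at h1
          simp only [zero_add, Int.negOnePow_one, lucZ_one, Units.val_neg,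
            Units.val_one]
          linarith
    | succ k ih =>
        obtain ⟨ih1, ih2⟩ := ih
        refine ⟨ih2, ?_⟩
        set s : ℤ := ((k : ℤ).negOnePow : ℤ) with hs
        have e1 : (((k : ℤ) + 1).negOnePow : ℤ) = -s := by
          rw [Int.negOnePow_succ]; push_cast; ring
        have e2 : (((k : ℤ) + 1 + 1).negOnePow : ℤ) = s := by
          rw [Int.negOnePow_succ, Int.negOnePow_succ]; push_cast; ring
        rw [e1] at ih2
        rw [e2]
        have r1 : lucZ ((k : ℤ) + 1 + 1) = lucZ ((k : ℤ) + 1) + lucZ k := by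
          have := lucZ_rec (k : ℤ); rw [show (k:ℤ) + 2 = (k:ℤ) + 1 + 1 by ring] at this
          exact this
        have r2 : lucZ (m + ((k : ℤ) + 1 + 1)) = lucZ (m + ((k:ℤ) + 1)) + lucZ (m + k) := by
          have := lucZ_rec (m + k)
          rw [show m + (k:ℤ) + 2 = m + ((k:ℤ) + 1 + 1) by ring,
            show m + (k:ℤ) + 1 = m + ((k:ℤ) + 1) by ring] at this
          exact this
        have r3 : lucZ (m - (k : ℤ)) = lucZ (m - ((k:ℤ) + 1)) + lucZ (m - ((k:ℤ) + 1 + 1)) := by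
          have := lucZ_rec (m - ((k:ℤ) + 1 + 1))
          rw [show m - ((k:ℤ) + 1 + 1) + 2 = m - (k:ℤ) by ring,
            show m - ((k:ℤ) + 1 + 1) + 1 = m - ((k:ℤ) + 1) by ring] at this
          exact this
        rw [r1, mul_add, ih1, ih2, r2, r3]
        ring
    | pred k ih =>
        obtain ⟨ih1, ih2⟩ := ih
        simp only [show -(k:ℤ) - 1 = -((k:ℤ)+1) from by ring]
        have goal2 : lucZ m * lucZ (-((k:ℤ) + 1) + 1) =
            lucZ (m + (-((k:ℤ) + 1) + 1)) +
              (((-((k:ℤ) + 1) + 1)).negOnePow : ℤ) * lucZ (m - (-((k:ℤ) + 1) + 1)) := by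
          rw [show -((k:ℤ) + 1) + 1 = -(k:ℤ) by ring]
          exact ih1
        refine ⟨?_, goal2⟩
        set s : ℤ := ((-(k : ℤ)).negOnePow : ℤ) with hs
        have e1 : (((-(k : ℤ)) + 1).negOnePow : ℤ) = -s := by
          rw [Int.negOnePow_succ]; push_cast; ring
        have e0 : ((-((k : ℤ)+1)).negOnePow : ℤ) = -s := by
          rw [show -((k:ℤ)+1) = -(k:ℤ) + -1 by ring, Int.negOnePow_add,
            show ((-1:ℤ)).negOnePow = -1 from by
              rw [Int.negOnePow_neg, Int.negOnePow_one]]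
          push_cast; ring
        rw [e1] at ih2
        rw [e0]
        have r1 : lucZ (-(k:ℤ) + 1) = lucZ (-(k:ℤ)) + lucZ (-((k:ℤ)+1)) := by
          have := lucZ_rec (-((k:ℤ)+1))
          rw [show -((k:ℤ)+1) + 2 = -(k:ℤ) + 1 by ring,
            show -((k:ℤ)+1) + 1 = -(k:ℤ) by ring] at this
          exact this
        have r2 : lucZ (m + (-(k:ℤ) + 1)) = lucZ (m + -(k:ℤ)) + lucZ (m + -((k:ℤ)+1)) := by
          have := lucZ_rec (m + -((k:ℤ)+1))
          rw [show m + -((k:ℤ)+1) + 2 = m + (-(k:ℤ) + 1) by ring,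
            show m + -((k:ℤ)+1) + 1 = m + -(k:ℤ) by ring] at this
          exact this
        have r3 : lucZ (m - -((k:ℤ)+1)) = lucZ (m - -(k:ℤ)) + lucZ (m - (-(k:ℤ) + 1)) := by
          have := lucZ_rec (m - (-(k:ℤ) + 1))
          rw [show m - (-(k:ℤ)+1) + 2 = m - -((k:ℤ)+1) by ring,
            show m - (-(k:ℤ)+1) + 1 = m - -(k:ℤ) by ring] at this
          exact this
        have r4 := lucZ_rec (m - (k:ℤ) - 1)
        linear_combination (norm := ring_nf) ih2 - ih1 - lucZ m * r1 + s * r3 - r2 + 2 * r4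
  exact (H n).1

lemma lucZ_neg (n : ℤ) (hn : Odd n) : lucZ (-n) = -lucZ n := by
  have h := lucZ_key 0 n
  have hs : ((n).negOnePow : ℤ) = -1 := by rw [Int.negOnePow_odd _ hn]; simp
  rw [lucZ_zero, hs, zero_add, zero_sub] at h
  linarith

/-- the three mutations of the solution
`L(ε,a,b) = (L_a, −ε·L_{a+εb}, L_b)` of `x₁² − x₂² + x₃² − x₁x₂x₃ = −4`
are again of the same form:
mutation in the first coordinate (`x̂₁ = x₂x₃ − x₁`) yields `L(ε, −a−2εb, b)`,
mutation in the second (`x̂₂ = −x₁x₃ − x₂`) yields `L(−ε, a, b)`,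
i.e. equals `ε·L_{a−εb}`, and mutation in the third (`x̂₃ = x₁x₂ − x₃`)
yields `L(ε, a, −b−2εa)`. -/
theorem stmt16 (a b ε : ℤ) (ha : Odd a) (hb : Odd b) (hab : IsCoprime a b)
    (hε : ε = 1 ∨ ε = -1) :
    (-ε * lucZ (a + ε * b)) * lucZ b - lucZ a = lucZ (-a - 2 * ε * b) ∧
    -(lucZ a * lucZ b) - (-ε * lucZ (a + ε * b)) = ε * lucZ (a - ε * b) ∧
    lucZ a * (-ε * lucZ (a + ε * b)) - lucZ b = lucZ (-b - 2 * ε * a) := by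
  obtain ⟨x, hx⟩ := ha
  obtain ⟨y, hy⟩ := hb
  have hbneg : ((b).negOnePow : ℤ) = -1 := by
    rw [Int.negOnePow_odd _ ⟨y, hy⟩]; simp
  have haneg : ((a).negOnePow : ℤ) = -1 := by
    rw [Int.negOnePow_odd _ ⟨x, hx⟩]; simp
  rcases hε with h | h <;> subst h
  · refine ⟨?_, ?_, ?_⟩
    · have k1 := lucZ_key (a + b) b
      rw [hbneg] at k1
      have n1 := lucZ_neg (a + 2 * b) ⟨x + 2 * y + 1, by omega⟩
      linear_combination (norm := ring_nf) -k1 - n1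
    · have k2 := lucZ_key a b
      rw [hbneg] at k2
      linear_combination (norm := ring_nf) -k2
    · have k3 := lucZ_key (a + b) a
      rw [haneg] at k3
      have n3 := lucZ_neg (b + 2 * a) ⟨y + 2 * x + 1, by omega⟩
      linear_combination (norm := ring_nf) -k3 - n3
  · refine ⟨?_, ?_, ?_⟩
    · have k1 := lucZ_key (a - b) b
      rw [hbneg] at k1
      have n1 := lucZ_neg (a - 2 * b) ⟨x - 2 * y - 1, by omega⟩
      linear_combination (norm := ring_nf) k1 - n1
    · have k2 := lucZ_key a b
      rw [hbneg] at k2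
      linear_combination (norm := ring_nf) -k2
    · have k3 := lucZ_key (a - b) a
      rw [haneg] at k3
      have n3 := lucZ_neg b ⟨y, hy⟩
      linear_combination (norm := ring_nf) k3 - n3
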